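/- Let S be a string of length n over an alphabet Σ, let p ≥ 1, let m = ⌊n/p⌋, and for 1 ≤ j ≤ m let u_j = S[(j−1)p+1, jp] denote the j-th consecutive block of length p. If p is a k-period of S, then the number of indices j with 2 ≤ j ≤ m such that u_j ≠ u_{j−1} is at most k. -/

import Mathlib

open scoped Classical

/-- If `p` is a `k`-period of a string `S` of length `n`
(0-indexed: at most `k` indices `x ∈ [0, n-p)` with `S x ≠ S (x+p)`),
and `m = ⌊n/p⌋`, then among the consecutive length-`p` blocks
`u_j = S[j*p, (j+1)*p)` for `0 ≤ j < m`, the number of indices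
`j ∈ [1, m)` with `u_j ≠ u_{j-1}` is at most `k`. -/
theorem stmt0 {α : Type*} (n p k : ℕ) (hp : 1 ≤ p) (S : ℕ → α)
    (hper : ((Finset.range (n - p)).filter (fun x => S x ≠ S (x + p))).card ≤ k) :
    ((Finset.Ico 1 (n / p)).filter
      (fun j => ∃ x < p, S (j * p + x) ≠ S ((j - 1) * p + x))).card ≤ k := by
  refine le_trans (Finset.card_le_card_of_injOn
    (fun j => (j - 1) * p +
      (if h : ∃ x < p, S (j * p + x) ≠ S ((j - 1) * p + x) then h.choose else 0))
    ?_ ?_) hper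
  · intro j hj
    simp only [Finset.mem_coe, Finset.mem_filter, Finset.mem_Ico] at hj
    obtain ⟨⟨hj1, hj2⟩, hex⟩ := hj
    dsimp only
    rw [dif_pos hex]
    obtain ⟨hxlt, hne⟩ := hex.choose_spec
    set x := hex.choose
    simp only [Finset.mem_coe, Finset.mem_filter, Finset.mem_range]
    have hjsub : (j - 1) * p + x + p = j * p + x := by
      have hle : p ≤ j * p := Nat.le_mul_of_pos_left p hj1
      rw [Nat.sub_one_mul]
      omega
    constructor
    · have h1 : j * p + x < (j + 1) * p := by nlinarith
      have h2 : (j + 1) * p ≤ n := by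
        calc (j + 1) * p ≤ (n / p) * p := by
              exact Nat.mul_le_mul_right p (by omega)
          _ ≤ n := Nat.div_mul_le_self n p
      omega
    · rw [hjsub]
      exact fun h => hne h.symm
  · intro a ha b hb hab
    simp only [Finset.coe_filter, Set.mem_setOf_eq, Finset.mem_Ico] at ha hb
    obtain ⟨⟨ha1, _⟩, hexa⟩ := ha
    obtain ⟨⟨hb1, _⟩, hexb⟩ := hb
    dsimp only at hab
    rw [dif_pos hexa, dif_pos hexb] at hab
    have hxa := hexa.choose_spec.1
    have hxb := hexb.choose_spec.1
    have key : ∀ q x : ℕ, x < p → (q * p + x) / p = q := by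
      intro q x hx
      rw [Nat.add_comm, Nat.add_mul_div_right _ _ (by omega : 0 < p),
        Nat.div_eq_of_lt hx, Nat.zero_add]
    have ha' := key (a - 1) hexa.choose hxa
    have hb' := key (b - 1) hexb.choose hxb
    have := congrArg (· / p) hab
    simp only [ha', hb'] at this
    omega
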